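/- arXiv:1407.5752 — 2 statements merged into one kernel-verified Lean document; each statement's English description precedes it below -/
import Mathlib

section
/- For z in the upper half-plane, the Stieltjes transform of the semicircle law m(z) = ∫_{−2}^{2} (x − z)^{−1}·(1/(2π))·sqrt(4 − x²) dx satisfies m(z)² + z·m(z) + 1 = 0. -/
open Real Complex Filter Topology Set intervalIntegral MeasureTheory

lemma logdiff_sq {v : ℂ} (hv : v.im ≠ 0) :
    (Complex.log (-v) - Complex.log v) ^ 2 = -(Real.pi : ℂ) ^ 2 := by
  have hL : Complex.log (-v) - Complex.log v = ((-v).arg - v.arg : ℝ) * Complex.I := by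
    apply Complex.ext
    · simp [Complex.log_re]
    · simp [Complex.log_im]
  rcases lt_or_gt_of_ne hv with h | h
  · rw [hL, Complex.arg_neg_eq_arg_add_pi_of_im_neg h]
    push_cast
    ring_nf
    rw [Complex.I_sq]
    ring
  · rw [hL, Complex.arg_neg_eq_arg_sub_pi_of_im_pos h]
    push_cast
    ring_nf
    rw [Complex.I_sq]
    ring

lemma one_add_div_ne_zero {e : ℂ} (he : e.im ≠ 0) {t : ℝ} (ht : 0 < t) :
    (1 + e * ((t : ℂ))⁻¹) ≠ 0 := by
  intro h0
  have him : (1 + e * ((t : ℂ))⁻¹).im = e.im * t⁻¹ := by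
    rw [← Complex.ofReal_inv]
    simp [Complex.mul_im]
  rw [h0] at him
  exact mul_ne_zero he (inv_ne_zero ht.ne') him.symm

lemma logdiff_tendsto {c d : ℂ} (hc : c.im ≠ 0) (hd : d.im ≠ 0) :
    Tendsto (fun t : ℝ => Complex.log (t + c) - Complex.log (t + d)) atTop (𝓝 0) := by
  have hinv : Tendsto (fun t : ℝ => ((t : ℂ))⁻¹) atTop (𝓝 0) := by
    have : Tendsto (fun t : ℝ => ((t⁻¹ : ℝ) : ℂ)) atTop (𝓝 ((0 : ℝ) : ℂ)) :=
      (Complex.continuous_ofReal.tendsto _).comp tendsto_inv_atTop_zero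
    simpa using this
  have key : ∀ e : ℂ, e.im ≠ 0 →
      Tendsto (fun t : ℝ => Complex.log (1 + e * ((t : ℂ))⁻¹)) atTop (𝓝 0) := by
    intro e he
    have h1 : Tendsto (fun t : ℝ => 1 + e * ((t : ℂ))⁻¹) atTop (𝓝 1) := by
      have := (hinv.const_mul e).const_add (1 : ℂ)
      simpa using this
    have hcont : ContinuousAt Complex.log 1 :=
      continuousAt_clog (by simp [Complex.mem_slitPlane_iff])
    have := hcont.tendsto.comp h1
    rw [Complex.log_one] at this
    exact this
  have heq : ∀ᶠ t : ℝ in atTop,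
      Complex.log (1 + c * ((t : ℂ))⁻¹) - Complex.log (1 + d * ((t : ℂ))⁻¹)
        = Complex.log (t + c) - Complex.log (t + d) := by
    filter_upwards [eventually_gt_atTop (0 : ℝ)] with t ht
    have ht0 : (t : ℂ) ≠ 0 := by exact_mod_cast ht.ne'
    have e1 : (t : ℂ) + c = (t : ℝ) * (1 + c * ((t : ℂ))⁻¹) := by
      field_simp
    have e2 : (t : ℂ) + d = (t : ℝ) * (1 + d * ((t : ℂ))⁻¹) := by
      field_simp
    rw [e1, e2, Complex.log_ofReal_mul ht (one_add_div_ne_zero hc ht),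
      Complex.log_ofReal_mul ht (one_add_div_ne_zero hd ht)]
    ring
  have h2 := (key c hc).sub (key d hd)
  rw [sub_zero] at h2
  exact Tendsto.congr' heq h2

lemma alg_identity (z S C αc : ℂ) (hSC : S^2 + C^2 = 1) (hα : αc^2 * (z+2) = z-2)
    (hC : C ≠ 0) (hα0 : αc ≠ 0) (hz2 : z + 2 ≠ 0)
    (hQ : S - Complex.I*αc*C ≠ 0) (hP : S + Complex.I*αc*C ≠ 0)
    (hden : z - 2*(2*C^2 - 1) ≠ 0) :
    (2-z)/(4*Complex.I*αc) * ((1/C^2*(1/2))/(S/C - Complex.I*αc)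
      - (1/C^2*(1/2))/(S/C + Complex.I*αc)) + z/4 + (2*C^2-1)/2
      = (2*S*C)^2/(z - 2*(2*C^2-1)) := by
  have hI := Complex.I_ne_zero
  have e1 : S/C - Complex.I*αc = (S - Complex.I*αc*C)/C := by
    rw [sub_div, mul_div_cancel_right₀ _ hC]
  have e2 : S/C + Complex.I*αc = (S + Complex.I*αc*C)/C := by
    rw [add_div, mul_div_cancel_right₀ _ hC]
  have hpq : (S - Complex.I*αc*C) * (S + Complex.I*αc*C) = S^2 + αc^2*C^2 := by
    linear_combination (-αc^2*C^2) * Complex.I_sq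
  have hPQ : S^2 + αc^2*C^2 ≠ 0 := hpq ▸ mul_ne_zero hQ hP
  have hA : (1/C^2*(1/2))/(S/C - Complex.I*αc) - (1/C^2*(1/2))/(S/C + Complex.I*αc)
      = (Complex.I*αc)/(S^2 + αc^2*C^2) := by
    rw [e1, e2, div_div_eq_mul_div, div_div_eq_mul_div, div_sub_div _ _ hQ hP, hpq]
    congr 1
    field_simp
    ring
  have hB : (2-z)/(4*Complex.I*αc) * (Complex.I*αc/(S^2+αc^2*C^2))
      = (2-z)/(4*(S^2+αc^2*C^2)) := by
    have h4 : (4:ℂ)*Complex.I*αc ≠ 0 := mul_ne_zero (mul_ne_zero (by norm_num) hI) hα0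
    rw [div_mul_div_comm, div_eq_div_iff (mul_ne_zero h4 hPQ) (mul_ne_zero (by norm_num : (4:ℂ) ≠ 0) hPQ)]
    ring
  have hsum : S^2 + αc^2*C^2 = (z + 2 - 4*C^2)/(z+2) := by
    rw [eq_div_iff hz2]
    linear_combination C^2 * hα + (z+2) * hSC
  have hden' : z + 2 - 4*C^2 ≠ 0 := by
    intro h; apply hden; linear_combination h
  rw [hA, hB, hsum]
  field_simp
  linear_combination (-32*(z+2-4*C^2)*C^2) * hSC

theorem stieltjes_transform_semicircle_quadratic (z : ℂ) (hz : 0 < z.im) (m : ℂ)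
    (hm : m = ∫ x in (-2 : ℝ)..2,
        (((1 / (2 * π)) * Real.sqrt (4 - x ^ 2) : ℝ) : ℂ) / ((x : ℂ) - z)) :
    m ^ 2 + z * m + 1 = 0 := by
  have hπ : (π : ℂ) ≠ 0 := by exact_mod_cast Real.pi_ne_zero
  have hzim : z.im ≠ 0 := hz.ne'
  -- basic nonvanishing facts
  have hz2 : z + 2 ≠ 0 := by
    intro h
    have := congrArg Complex.im h
    simp at this
    exact hzim this
  have hsub : ∀ x : ℝ, (x : ℂ) - z ≠ 0 := by
    intro x h
    have := congrArg Complex.im h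
    simp at this
    exact hzim this
  have hden : ∀ x : ℝ, z - (x : ℂ) ≠ 0 := by
    intro x h
    have := congrArg Complex.im h
    simp at this
    exact hzim this
  -- the square root α of (z-2)/(z+2)
  have hw_im : ((z - 2)/(z + 2)).im ≠ 0 := by
    intro h
    set w := (z - 2)/(z + 2) with hw
    have hwz : z - 2 = w * (z + 2) := by
      rw [hw]; field_simp
    have him : (z - 2).im = (w * (z + 2)).im := congrArg Complex.im hwz
    have hre : (z - 2).re = (w * (z + 2)).re := congrArg Complex.re hwz
    rw [Complex.mul_im] at him
    rw [Complex.mul_re] at hre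
    rw [h] at him hre
    have him' : z.im = w.re * z.im := by
      have h1 : (z - 2).im = z.im := by simp
      have h2 : (z + 2).im = z.im := by simp
      have h3 : (z + 2).re = z.re + 2 := by simp
      rw [h1, h2, h3] at him
      linarith [him]
    have hre' : z.re - 2 = w.re * (z.re + 2) := by
      have h1 : (z - 2).re = z.re - 2 := by simp
      have h2 : (z + 2).im = z.im := by simp
      have h3 : (z + 2).re = z.re + 2 := by simp
      rw [h1, h2, h3] at hre
      linarith [hre]
    have hw1 : w.re = 1 := by
      by_contra hne
      have h0 : (w.re - 1) * z.im = 0 := by linarith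
      rcases mul_eq_zero.mp h0 with h1 | h2
      · exact hne (by linarith)
      · exact hzim h2
    rw [hw1, one_mul] at hre'
    linarith
  have hw0 : (z - 2)/(z + 2) ≠ 0 := by
    intro h; rw [h] at hw_im; simp at hw_im
  obtain ⟨α, hα2⟩ : ∃ a : ℂ, a^2 = (z - 2)/(z + 2) :=
    ⟨((z - 2)/(z + 2)) ^ ((1:ℂ)/2), by
      rw [sq, ← Complex.cpow_add _ _ hw0]
      norm_num⟩
  have hαmul : α^2 * (z + 2) = z - 2 := by
    rw [hα2]; field_simp
  have hαre : α.re ≠ 0 := by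
    intro h
    apply hw_im
    rw [← hα2, sq, Complex.mul_im, h]
    ring
  have hα0 : α ≠ 0 := by
    intro h
    rw [h] at hα2
    simp at hα2
    exact hw0 hα2.symm
  have hIα_im : (Complex.I * α).im ≠ 0 := by
    simpa using hαre
  have hnIα_im : (-(Complex.I * α)).im ≠ 0 := by
    simpa using hαre
  -- the integrand after substitution
  set f : ℝ → ℂ := fun θ => ((Real.sin θ ^ 2 : ℝ) : ℂ) / (z - 2 * (Real.cos θ : ℂ)) with hfdef
  have hf_cont : Continuous f := by
    apply Continuous.div
    · exact Complex.continuous_ofReal.comp (Real.continuous_sin.pow 2)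
    · exact continuous_const.sub (continuous_const.mul (Complex.continuous_ofReal.comp Real.continuous_cos))
    · intro x
      intro h
      have := congrArg Complex.im h
      simp at this
      exact hzim this
  -- change of variables x = 2 cos θ
  set g : ℝ → ℂ := fun x => (((1 / (2 * π)) * Real.sqrt (4 - x ^ 2) : ℝ) : ℂ) / ((x : ℂ) - z) with hgdef
  have hg_cont : Continuous g := by
    apply Continuous.div
    · exact Complex.continuous_ofReal.comp
        (continuous_const.mul ((continuous_const.sub (continuous_pow 2)).sqrt))
    · exact Complex.continuous_ofReal.sub continuous_const
    · exact hsub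
  have hCOV : (∫ θ in (π : ℝ)..0, (-2 * Real.sin θ) • g (2 * Real.cos θ))
      = ∫ x in (-2 : ℝ)..2, g x := by
    have h := intervalIntegral.integral_comp_smul_deriv
      (f := fun θ : ℝ => 2 * Real.cos θ) (f' := fun θ : ℝ => -2 * Real.sin θ)
      (g := g) (a := (π : ℝ)) (b := 0)
      (fun x _ => by simpa [mul_comm, neg_mul, mul_neg] using (Real.hasDerivAt_cos x).const_mul 2)
      ((continuous_const.mul Real.continuous_sin).continuousOn)
      hg_cont
    simpa [Function.comp, Real.cos_pi, Real.cos_zero] using h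
  -- integrand equality on [0, π]
  have hEqOn : Set.EqOn (fun θ => (-2 * Real.sin θ) • g (2 * Real.cos θ))
      (fun θ => ((2/π : ℝ)) • f θ) (Set.uIcc (0:ℝ) π) := by
    intro θ hθ
    rw [Set.uIcc_of_le Real.pi_pos.le] at hθ
    obtain ⟨h0, h1⟩ := hθ
    have hsin : 0 ≤ Real.sin θ := Real.sin_nonneg_of_nonneg_of_le_pi h0 h1
    have hsqrt : Real.sqrt (4 - (2*Real.cos θ)^2) = 2*Real.sin θ := by
      rw [show (4 - (2*Real.cos θ)^2 : ℝ) = (2*Real.sin θ)^2 by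
        nlinarith [Real.sin_sq_add_cos_sq θ]]
      exact Real.sqrt_sq (by positivity)
    have d1 : (2*(Real.cos θ : ℂ) - z) ≠ 0 := by
      have := hsub (2*Real.cos θ)
      simp only [Complex.ofReal_mul, Complex.ofReal_ofNat] at this
      exact this
    have d2 : (z - 2*(Real.cos θ : ℂ)) ≠ 0 := by
      have := hden (2*Real.cos θ)
      simp only [Complex.ofReal_mul, Complex.ofReal_ofNat] at this
      exact this
    have d1c : 2*Complex.cos (θ:ℂ) - z ≠ 0 := by push_cast at d1; exact d1
    have d2c : z - 2*Complex.cos (θ:ℂ) ≠ 0 := by push_cast at d2; exact d2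
    simp only [hgdef, hfdef]
    rw [hsqrt, Complex.real_smul, Complex.real_smul]
    push_cast
    field_simp [d1c, d2c]
    ring
  -- the antiderivative G
  set G : ℝ → ℂ := fun θ =>
    (2 - z)/(4*Complex.I*α) * (Complex.log ((Real.tan (θ/2) : ℂ) - Complex.I*α)
      - Complex.log ((Real.tan (θ/2) : ℂ) + Complex.I*α)) + z*(θ:ℂ)/4
      + ((Real.sin θ : ℝ) : ℂ)/2 with hGdef
  have hG' : ∀ θ : ℝ, Real.cos (θ/2) ≠ 0 → HasDerivAt G
      ((2 - z)/(4*Complex.I*α) *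
        (((1/Real.cos (θ/2)^2 * (1/2) : ℝ) : ℂ) / ((Real.tan (θ/2) : ℂ) - Complex.I*α)
          - ((1/Real.cos (θ/2)^2 * (1/2) : ℝ) : ℂ) / ((Real.tan (θ/2) : ℂ) + Complex.I*α))
        + z/4 + ((Real.cos θ : ℝ) : ℂ)/2) θ := by
    intro θ hc2
    have htan : HasDerivAt (fun t : ℝ => Real.tan (t/2)) (1/Real.cos (θ/2)^2 * (1/2)) θ := by
      have := (Real.hasDerivAt_tan hc2).comp θ ((hasDerivAt_id θ).div_const 2)
      simpa [Function.comp_def] using this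
    have hcast : HasDerivAt (fun t : ℝ => ((Real.tan (t/2) : ℝ) : ℂ))
        (((1/Real.cos (θ/2)^2 * (1/2) : ℝ)) : ℂ) θ := htan.ofReal_comp
    have mem1 : ((Real.tan (θ/2) : ℝ) : ℂ) - Complex.I*α ∈ Complex.slitPlane := by
      rw [Complex.mem_slitPlane_iff]
      right
      have him : (((Real.tan (θ/2) : ℝ) : ℂ) - Complex.I*α).im = -α.re := by
        simp only [Complex.sub_im, Complex.mul_im, Complex.I_re, Complex.I_im,
          Complex.ofReal_im, Complex.ofReal_re]
        ring
      rw [him]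
      simpa using hαre
    have mem2 : ((Real.tan (θ/2) : ℝ) : ℂ) + Complex.I*α ∈ Complex.slitPlane := by
      rw [Complex.mem_slitPlane_iff]
      right
      have him : (((Real.tan (θ/2) : ℝ) : ℂ) + Complex.I*α).im = α.re := by
        simp only [Complex.add_im, Complex.mul_im, Complex.I_re, Complex.I_im,
          Complex.ofReal_im, Complex.ofReal_re]
        ring
      rw [him]
      exact hαre
    have hlog1 := (hcast.sub_const (Complex.I*α)).clog_real mem1
    have hlog2 := (hcast.add_const (Complex.I*α)).clog_real mem2
    have hlin : HasDerivAt (fun t : ℝ => z*(t:ℂ)/4) (z/4) θ := by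
      simpa using (((hasDerivAt_id θ).ofReal_comp).const_mul z).div_const 4
    have hsin : HasDerivAt (fun t : ℝ => ((Real.sin t : ℝ) : ℂ)/2) (((Real.cos θ : ℝ) : ℂ)/2) θ :=
      (Real.hasDerivAt_sin θ).ofReal_comp.div_const 2
    exact (((hlog1.sub hlog2).const_mul ((2 - z)/(4*Complex.I*α))).add hlin).add hsin
  -- derivative equals integrand on (0, π)
  have hderiv : ∀ θ ∈ Set.Ioo (0:ℝ) π, HasDerivAt G (f θ) θ := by
    intro θ hθ
    have hcos2 : 0 < Real.cos (θ/2) :=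
      Real.cos_pos_of_mem_Ioo ⟨by linarith [hθ.1, Real.pi_pos], by linarith [hθ.2]⟩
    have h := hG' θ hcos2.ne'
    convert h using 1
    set S : ℂ := ((Real.sin (θ/2) : ℝ) : ℂ) with hSdef
    set C : ℂ := ((Real.cos (θ/2) : ℝ) : ℂ) with hCdef
    have hCne : C ≠ 0 := by
      rw [hCdef]; exact_mod_cast hcos2.ne'
    have hSC : S^2 + C^2 = 1 := by
      rw [hSdef, hCdef]; exact_mod_cast Real.sin_sq_add_cos_sq (θ/2)
    have htan_c : ((Real.tan (θ/2) : ℝ) : ℂ) = S / C := by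
      rw [hSdef, hCdef, Real.tan_eq_sin_div_cos, Complex.ofReal_div]
    have hu'_c : ((1/Real.cos (θ/2)^2 * (1/2) : ℝ) : ℂ) = 1/C^2*(1/2) := by
      rw [hCdef]
      simp only [Complex.ofReal_mul, Complex.ofReal_div, Complex.ofReal_one,
        Complex.ofReal_pow, Complex.ofReal_ofNat]
    have hcosθ : ((Real.cos θ : ℝ) : ℂ) = 2*C^2 - 1 := by
      have h2 := Real.cos_two_mul (θ/2)
      rw [show 2*(θ/2) = θ by ring] at h2
      rw [h2, hCdef]; push_cast; ring
    have hsinθ : ((Real.sin θ^2 : ℝ) : ℂ) = (2*S*C)^2 := by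
      have h2 := Real.sin_two_mul (θ/2)
      rw [show 2*(θ/2) = θ by ring] at h2
      rw [h2, hSdef, hCdef]; push_cast; ring
    have hQim : (S - Complex.I*α*C).im = -(α.re * Real.cos (θ/2)) := by
      rw [hSdef, hCdef]
      simp only [Complex.sub_im, Complex.mul_im, Complex.mul_re, Complex.I_re, Complex.I_im,
        Complex.ofReal_im, Complex.ofReal_re]
      ring
    have hPim : (S + Complex.I*α*C).im = α.re * Real.cos (θ/2) := by
      rw [hSdef, hCdef]
      simp only [Complex.add_im, Complex.mul_im, Complex.mul_re, Complex.I_re, Complex.I_im,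
        Complex.ofReal_im, Complex.ofReal_re]
      ring
    have hQ : S - Complex.I*α*C ≠ 0 := by
      intro h0
      have := congrArg Complex.im h0
      rw [hQim] at this
      exact mul_ne_zero hαre hcos2.ne' (by simpa using this)
    have hP : S + Complex.I*α*C ≠ 0 := by
      intro h0
      have := congrArg Complex.im h0
      rw [hPim] at this
      exact mul_ne_zero hαre hcos2.ne' (by simpa using this)
    have hdenθ : z - 2*(2*C^2 - 1) ≠ 0 := by
      rw [← hcosθ]
      have := hden (2*Real.cos θ)
      simp only [Complex.ofReal_mul, Complex.ofReal_ofNat] at this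
      exact this
    rw [hfdef]
    simp only
    rw [hsinθ, show (2 : ℂ)*((Real.cos θ : ℝ) : ℂ) = 2*(2*C^2-1) by rw [hcosθ],
      htan_c, hu'_c, hcosθ]
    exact (alg_identity z S C α hSC hαmul hCne hα0 hz2 hQ hP hdenθ).symm
  -- endpoint limits
  have hlim0 : Tendsto G (𝓝[>] (0:ℝ)) (𝓝 (G 0)) :=
    (hG' 0 (by simp)).continuousAt.continuousWithinAt
  have hlimπ : Tendsto G (𝓝[<] π) (𝓝 (z*(π:ℂ)/4)) := by
    have hhalf : Tendsto (fun θ : ℝ => θ/2) (𝓝[<] π) (𝓝[<] (π/2)) := by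
      refine tendsto_nhdsWithin_iff.mpr ⟨?_, ?_⟩
      · exact ((continuous_id.div_const 2).tendsto π).mono_left nhdsWithin_le_nhds
      · filter_upwards [self_mem_nhdsWithin] with x hx
        simp only [Set.mem_Iio] at hx ⊢
        linarith
    have hu_top : Tendsto (fun θ : ℝ => Real.tan (θ/2)) (𝓝[<] π) atTop :=
      Real.tendsto_tan_pi_div_two.comp hhalf
    have hlogd : Tendsto (fun θ : ℝ => Complex.log ((Real.tan (θ/2) : ℂ) - Complex.I*α)
        - Complex.log ((Real.tan (θ/2) : ℂ) + Complex.I*α)) (𝓝[<] π) (𝓝 0) := by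
      have hcomp := (logdiff_tendsto hnIα_im hIα_im).comp hu_top
      exact hcomp.congr (fun θ => by
        simp only [Function.comp_apply, sub_eq_add_neg])
    have h1 : Tendsto (fun θ : ℝ => z*(θ:ℂ)/4) (𝓝[<] π) (𝓝 (z*(π:ℂ)/4)) := by
      have : Continuous (fun θ : ℝ => z*(θ:ℂ)/4) :=
        ((continuous_const.mul Complex.continuous_ofReal).div_const 4)
      exact (this.tendsto π).mono_left nhdsWithin_le_nhds
    have h2 : Tendsto (fun θ : ℝ => ((Real.sin θ : ℝ) : ℂ)/2) (𝓝[<] π) (𝓝 0) := by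
      have hc : Continuous (fun θ : ℝ => ((Real.sin θ : ℝ) : ℂ)/2) :=
        ((Complex.continuous_ofReal.comp Real.continuous_sin).div_const 2)
      have := (hc.tendsto π).mono_left (nhdsWithin_le_nhds (s := Set.Iio π))
      simpa [Real.sin_pi] using this
    have hfin := ((hlogd.const_mul ((2 - z)/(4*Complex.I*α))).add h1).add h2
    rw [hGdef]
    have hval : (2 - z)/(4*Complex.I*α) * 0 + z*(π:ℂ)/4 + 0 = z*(π:ℂ)/4 := by ring
    rw [← hval]
    exact hfin
  -- FTC
  have hJ : (∫ θ in (0:ℝ)..π, f θ) = z*(π:ℂ)/4 - G 0 :=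
    intervalIntegral.integral_eq_sub_of_hasDerivAt_of_tendsto Real.pi_pos hderiv
      (hf_cont.intervalIntegrable _ _) hlim0 hlimπ
  -- value of G at 0
  set L : ℂ := Complex.log (-(Complex.I*α)) - Complex.log (Complex.I*α) with hLdef
  have hG0 : G 0 = (2 - z)/(4*Complex.I*α) * L := by
    rw [hGdef, hLdef]
    norm_num [Real.tan_zero, Real.sin_zero]
  -- express m
  have hmJ : m = -((2/π : ℝ) • (z*(π:ℂ)/4 - G 0)) := by
    rw [hm, ← hCOV, intervalIntegral.integral_symm,
      intervalIntegral.integral_congr hEqOn, intervalIntegral.integral_smul, hJ]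
  have hL2 : L^2 = -(π : ℂ)^2 := logdiff_sq hIα_im
  have hm2 : m = -z/2 + (2/(π:ℂ))*((2 - z)/(4*Complex.I*α))*L := by
    rw [hmJ, hG0, Complex.real_smul]
    push_cast
    field_simp
    ring
  have hX : m + z/2 = (2 - z)/((π:ℂ)*2*Complex.I*α)*L := by
    rw [hm2]; ring
  have hsq : (m + z/2)^2 = (2 - z)^2*L^2/(((π:ℂ)*2*Complex.I*α)^2) := by
    rw [hX]; ring
  have hpow : (((π:ℂ)*2*Complex.I*α)^2) ≠ 0 :=
    pow_ne_zero _ (mul_ne_zero (mul_ne_zero (mul_ne_zero hπ (by norm_num)) Complex.I_ne_zero) hα0)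
  have key : (m + z/2)^2 = (z^2 - 4)/4 := by
    rw [hsq, hL2, div_eq_div_iff hpow (by norm_num : (4:ℂ) ≠ 0)]
    linear_combination (4*(π:ℂ)^2*(z - 2)) * hαmul + (-4*(z^2 - 4)*((π:ℂ))^2*α^2) * Complex.I_sq
  linear_combination key
end

section
/- For the quadratic potential V(x) = x²/2, the semicircle density satisfies the equilibrium equation: for every t with |t| < 2, the principal value integral ∫_{−2}^{2} ρ_sc(s)/(t − s) ds equals t/2 = V'(t)/2. -/
open Real Filter MeasureTheory

noncomputable def scF (t x : ℝ) : ℝ :=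
  t * Real.arcsin (x / 2) - Real.sqrt (4 - x ^ 2)
    + Real.sqrt (4 - t ^ 2) *
      Real.log ((4 - t * x + Real.sqrt (4 - t ^ 2) * Real.sqrt (4 - x ^ 2)) / (2 * (x - t)))

lemma sqrt_four : Real.sqrt 4 = 2 := by
  rw [show (4:ℝ) = 2 ^ 2 by norm_num, Real.sqrt_sq (by norm_num : (0:ℝ) ≤ 2)]

lemma hasDerivAt_sqrt_quad (s : ℝ) (h : (0:ℝ) < 4 - s ^ 2) :
    HasDerivAt (fun x => Real.sqrt (4 - x ^ 2)) (-s / Real.sqrt (4 - s ^ 2)) s := by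
  have hinner : HasDerivAt (fun x : ℝ => 4 - x ^ 2) (-(2 * s)) s := by
    simpa using (hasDerivAt_pow 2 s).const_sub (4:ℝ)
  have := (Real.hasDerivAt_sqrt h.ne').comp s hinner
  refine this.congr_deriv ?_
  have hr : Real.sqrt (4 - s ^ 2) ≠ 0 := (Real.sqrt_pos.mpr h).ne'
  field_simp

lemma scF_deriv (t : ℝ) (ht : |t| < 2) (s : ℝ) (hs : |s| < 2) (hst : s ≠ t) :
    HasDerivAt (scF t) (Real.sqrt (4 - s ^ 2) / (t - s)) s := by
  obtain ⟨ht1, ht2⟩ := abs_lt.mp ht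
  obtain ⟨hs1, hs2⟩ := abs_lt.mp hs
  have hs4 : (0:ℝ) < 4 - s ^ 2 := by nlinarith
  have ht4 : (0:ℝ) < 4 - t ^ 2 := by nlinarith
  have hr : 0 < Real.sqrt (4 - s ^ 2) := Real.sqrt_pos.mpr hs4
  have ha : 0 < Real.sqrt (4 - t ^ 2) := Real.sqrt_pos.mpr ht4
  have hr2 : Real.sqrt (4 - s ^ 2) ^ 2 = 4 - s ^ 2 := Real.sq_sqrt hs4.le
  have ha2 : Real.sqrt (4 - t ^ 2) ^ 2 = 4 - t ^ 2 := Real.sq_sqrt ht4.le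
  set r := Real.sqrt (4 - s ^ 2) with hrdef
  set a := Real.sqrt (4 - t ^ 2) with hadef
  have hN : 0 < 4 - t * s + a * r := by nlinarith
  have hst' : s - t ≠ 0 := sub_ne_zero.mpr hst
  have hD : 2 * (s - t) ≠ 0 := by positivity
  -- arcsin part
  have harcsin : HasDerivAt (fun x : ℝ => Real.arcsin (x / 2))
      (1 / Real.sqrt (1 - (s / 2) ^ 2) * (2⁻¹)) s := by
    have hinner : HasDerivAt (fun x : ℝ => x / 2) (2⁻¹ : ℝ) s := by
      simpa using (hasDerivAt_id s).div_const 2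
    exact (Real.hasDerivAt_arcsin (by intro h; rw [div_eq_iff (by norm_num : (2:ℝ) ≠ 0)] at h; nlinarith)
      (by intro h; rw [div_eq_iff (by norm_num : (2:ℝ) ≠ 0)] at h; nlinarith)).comp s hinner
  have hsq14 : Real.sqrt (1 - (s / 2) ^ 2) = r / 2 := by
    rw [hrdef, show (1 - (s/2)^2) = (4 - s^2)/4 by ring, Real.sqrt_div hs4.le, sqrt_four]
  rw [hsq14] at harcsin
  -- sqrt part
  have hsqrt := hasDerivAt_sqrt_quad s hs4
  -- log part
  have hNum : HasDerivAt (fun x => 4 - t * x + a * Real.sqrt (4 - x ^ 2))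
      (-t + a * (-s / r)) s := by
    have h1 : HasDerivAt (fun x : ℝ => 4 - t * x) (-t) s := by
      simpa using ((hasDerivAt_id s).const_mul t).const_sub (4:ℝ)
    exact h1.add ((hasDerivAt_sqrt_quad s hs4).const_mul a)
  have hDen : HasDerivAt (fun x : ℝ => 2 * (x - t)) 2 s := by
    simpa using ((hasDerivAt_id s).sub_const t).const_mul (2:ℝ)
  have hQ := hNum.div hDen hD
  have hQne : (4 - t * s + a * r) / (2 * (s - t)) ≠ 0 := div_ne_zero hN.ne' hD
  have hlog := (Real.hasDerivAt_log hQne).comp s hQ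
  have hlog' : HasDerivAt
      (fun x => Real.log ((4 - t * x + a * Real.sqrt (4 - x ^ 2)) / (2 * (x - t))))
      (a / (r * (t - s))) s := by
    refine hlog.congr_deriv ?_
    have hts : t - s ≠ 0 := fun h => hst (by linarith [sub_eq_zero.mp h])
    field_simp
    linear_combination (-16*t^2 + 4*t^2*a^2 - 4*t^2*r*a + 4*t^4 + 32*s*t - 8*s*t*a^2 + 8*s*t*r*a
      - 8*s*t^3 - 16*s^2 + 4*s^2*a^2 - 4*s^2*r*a + 4*s^2*t^2
      + (-32*t*s + 8*t*s*a^2 - 8*t*s*r*a + 8*t^3*s + s*a - 4*t^2*s^2 + 16*s^2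
      - 4*s^2*a^2 + 4*s^2*r*a - t*a + 16*t^2 - 4*t^2*a^2 + 4*t^2*r*a - 4*t^4)) * hr2
      + (16*t^2 - 32*s*t + 16*s^2 - 4*s^2*t^2 + 8*s^3*t - 4*s^4
      + (-s*r + t*r + 32*t*s - 8*t*s^3 - 16*s^2 + 4*s^4 - 16*t^2 + 4*t^2*s^2)) * ha2
  have total := ((harcsin.const_mul t).sub hsqrt).add (hlog'.const_mul a)
  refine total.congr_deriv ?_
  have hts : t - s ≠ 0 := fun h => hst (by linarith [sub_eq_zero.mp h])
  field_simp
  linear_combination (2*r^2*(t-s) + (2*t*a^2 - 2*t*r^2 - 2*t^2*s + 2*t^3 - 2*s*a^2 - r + 2*s*r^2 - 8*t + 8*s)) * hr2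
    + (-(2*r^2*(t-s)) + (r + 8*t - 2*t*s^2 - 8*s + 2*s^3)) * ha2

lemma scF_contOn (t : ℝ) (ht : |t| < 2) :
    ContinuousOn (scF t) {x : ℝ | -2 ≤ x ∧ x ≤ 2 ∧ x ≠ t} := by
  obtain ⟨ht1, ht2⟩ := abs_lt.mp ht
  apply ContinuousOn.add
  · apply ContinuousOn.sub
    · exact (continuous_const.mul (Real.continuous_arcsin.comp (continuous_id.div_const 2))).continuousOn
    · exact (Real.continuous_sqrt.comp (by continuity)).continuousOn
  · apply ContinuousOn.mul continuousOn_const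
    apply ContinuousOn.log
    · apply ContinuousOn.div
      · exact (by continuity : Continuous fun x : ℝ => 4 - t * x + Real.sqrt (4 - t ^ 2) * Real.sqrt (4 - x ^ 2)).continuousOn
      · exact (by continuity : Continuous fun x : ℝ => 2 * (x - t)).continuousOn
      · rintro x ⟨-, -, hxt⟩
        simp [sub_ne_zero.mpr hxt]
    · rintro x ⟨hx1, hx2, hxt⟩
      apply div_ne_zero
      · have htx : t * x < 4 := by nlinarith [le_abs_self t, neg_abs_le t]
        nlinarith [Real.sqrt_nonneg (4 - x ^ 2), Real.sqrt_nonneg (4 - t ^ 2)]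
      · simp [sub_ne_zero.mpr hxt]

lemma scF_ftc (t : ℝ) (ht : |t| < 2) (p q : ℝ) (hp : -2 ≤ p) (hq : q ≤ 2) (hpq : p ≤ q)
    (htpq : t ∉ Set.Icc p q) :
    ∫ x in p..q, Real.sqrt (4 - x ^ 2) / (t - x) = scF t q - scF t p := by
  have hsub : Set.Icc p q ⊆ {x : ℝ | -2 ≤ x ∧ x ≤ 2 ∧ x ≠ t} := by
    rintro x ⟨h1, h2⟩
    exact ⟨le_trans hp h1, le_trans h2 hq, fun h => htpq (h ▸ ⟨h1, h2⟩)⟩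
  have hcont : ContinuousOn (fun x => Real.sqrt (4 - x ^ 2) / (t - x)) (Set.Icc p q) := by
    apply ContinuousOn.div
    · exact (Real.continuous_sqrt.comp (by continuity)).continuousOn
    · exact (by continuity : Continuous fun x : ℝ => t - x).continuousOn
    · intro x hx h
      exact (hsub hx).2.2 (by linarith [sub_eq_zero.mp h])
  apply intervalIntegral.integral_eq_sub_of_hasDeriv_right_of_le hpq
    ((scF_contOn t ht).mono hsub) ?_ (hcont.intervalIntegrable_of_Icc hpq)
  intro x hx
  obtain ⟨hx1, hx2⟩ := hx
  refine (scF_deriv t ht x (abs_lt.mpr ⟨by linarith, by linarith⟩) ?_).hasDerivWithinAt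
  exact (hsub ⟨hx1.le, hx2.le⟩).2.2

lemma Nf_pos (t : ℝ) (ht : |t| < 2) (x : ℝ) (hx1 : -2 ≤ x) (hx2 : x ≤ 2) :
    0 < 4 - t * x + Real.sqrt (4 - t ^ 2) * Real.sqrt (4 - x ^ 2) := by
  obtain ⟨ht1, ht2⟩ := abs_lt.mp ht
  have htx : t * x < 4 := by nlinarith [le_abs_self t, neg_abs_le t]
  nlinarith [Real.sqrt_nonneg (4 - x ^ 2), Real.sqrt_nonneg (4 - t ^ 2)]

lemma scF_two (t : ℝ) (ht : |t| < 2) : scF t 2 = t * (π / 2) := by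
  obtain ⟨ht1, ht2⟩ := abs_lt.mp ht
  have h2t : (2:ℝ) - t ≠ 0 := by linarith
  have : ((4:ℝ) - t * 2 + Real.sqrt (4 - t ^ 2) * Real.sqrt (4 - 2 ^ 2)) / (2 * (2 - t)) = 1 := by
    rw [show (4:ℝ) - 2 ^ 2 = 0 by norm_num, Real.sqrt_zero, mul_zero, add_zero]
    field_simp
    ring
  unfold scF
  rw [this, Real.log_one, mul_zero, add_zero, show (2:ℝ)/2 = 1 by norm_num, Real.arcsin_one,
    show (4:ℝ) - 2 ^ 2 = 0 by norm_num, Real.sqrt_zero, sub_zero]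

lemma scF_neg_two (t : ℝ) (ht : |t| < 2) : scF t (-2) = -(t * (π / 2)) := by
  obtain ⟨ht1, ht2⟩ := abs_lt.mp ht
  have h2t : (2:ℝ) + t ≠ 0 := by linarith
  have : ((4:ℝ) - t * (-2) + Real.sqrt (4 - t ^ 2) * Real.sqrt (4 - (-2) ^ 2)) / (2 * ((-2) - t)) = -1 := by
    rw [show (4:ℝ) - (-2) ^ 2 = 0 by norm_num, Real.sqrt_zero, mul_zero, add_zero,
      div_eq_iff (by intro h; apply h2t; linarith [mul_eq_zero.mp h] : (2:ℝ) * ((-2) - t) ≠ 0)]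
    ring
  unfold scF
  rw [this, show (-1 : ℝ) = -(1:ℝ) by ring, Real.log_neg_eq_log, Real.log_one, mul_zero, add_zero,
    show (-2:ℝ)/2 = -1 by norm_num, Real.arcsin_neg_one,
    show (4:ℝ) - (-2) ^ 2 = 0 by norm_num, Real.sqrt_zero, sub_zero]
  ring

theorem semicircle_equilibrium_equation (t : ℝ) (ht : |t| < 2) :
    Tendsto (fun ε : ℝ =>
        ∫ s in {s : ℝ | ε < |s - t| ∧ |s| < 2},
          (1 / (2 * π)) * Real.sqrt (4 - s ^ 2) / (t - s))
      (nhdsWithin 0 (Set.Ioi 0)) (nhds (t / 2)) := by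
  obtain ⟨ht1, ht2⟩ := abs_lt.mp ht
  set a := Real.sqrt (4 - t ^ 2) with hadef
  set Nf : ℝ → ℝ := fun x => 4 - t * x + a * Real.sqrt (4 - x ^ 2) with hNf
  set δ : ℝ := min (2 - t) (2 + t) with hδ
  have hδpos : 0 < δ := by
    apply lt_min <;> linarith
  -- the limit function
  set Ψ : ℝ → ℝ := fun ε => (1 / (2 * π)) *
      (t * π + (t * (Real.arcsin ((t - ε) / 2) - Real.arcsin ((t + ε) / 2))
        - Real.sqrt (4 - (t - ε) ^ 2) + Real.sqrt (4 - (t + ε) ^ 2)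
        + a * (Real.log (Nf (t - ε)) - Real.log (Nf (t + ε))))) with hΨ
  have hmem : Set.Ioo (0:ℝ) δ ∈ nhdsWithin (0:ℝ) (Set.Ioi 0) := by
    rw [show Set.Ioo (0:ℝ) δ = Set.Ioi 0 ∩ Set.Iio δ by ext x; simp [Set.mem_Ioo, and_comm]]
    exact Filter.inter_mem self_mem_nhdsWithin
      (nhdsWithin_le_nhds (Iio_mem_nhds hδpos))
  have heq : ∀ ε ∈ Set.Ioo (0:ℝ) δ,
      (∫ s in {s : ℝ | ε < |s - t| ∧ |s| < 2},
        (1 / (2 * π)) * Real.sqrt (4 - s ^ 2) / (t - s)) = Ψ ε := by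
    intro ε hε
    obtain ⟨hε0, hεδ⟩ := hε
    have hεδ1 : ε < 2 - t := lt_of_lt_of_le hεδ (min_le_left _ _)
    have hεδ2 : ε < 2 + t := lt_of_lt_of_le hεδ (min_le_right _ _)
    -- set equality
    have hset : {s : ℝ | ε < |s - t| ∧ |s| < 2}
        = Set.Ioo (-2) (t - ε) ∪ Set.Ioo (t + ε) 2 := by
      ext s
      simp only [Set.mem_setOf_eq, Set.mem_union, Set.mem_Ioo, lt_abs, abs_lt]
      constructor
      · rintro ⟨h1 | h1, h2, h3⟩
        · right; constructor <;> linarith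
        · left; constructor <;> linarith
      · rintro (⟨h1, h2⟩ | ⟨h1, h2⟩)
        · exact ⟨Or.inr (by linarith), by linarith, by linarith⟩
        · exact ⟨Or.inl (by linarith), by linarith, by linarith⟩
    rw [hset]
    have hcont : ∀ p q : ℝ, -2 ≤ p → q ≤ 2 → (t ∉ Set.Icc p q) →
        IntegrableOn (fun s => (1 / (2 * π)) * Real.sqrt (4 - s ^ 2) / (t - s))
          (Set.Ioo p q) := by
      intro p q hp hq htpq
      apply (ContinuousOn.integrableOn_Icc ?_).mono_set Set.Ioo_subset_Icc_self
      apply ContinuousOn.div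
      · exact (continuous_const.mul (Real.continuous_sqrt.comp (by continuity))).continuousOn
      · exact (by continuity : Continuous fun x : ℝ => t - x).continuousOn
      · intro x hx h
        exact htpq (by rw [show t = x by linarith [sub_eq_zero.mp h]]; exact hx)
    have ht1' : t ∉ Set.Icc (-2 : ℝ) (t - ε) := by
      simp only [Set.mem_Icc, not_and]
      intro _; linarith
    have ht2' : t ∉ Set.Icc (t + ε) (2 : ℝ) := by
      simp only [Set.mem_Icc, not_and]
      intro h; linarith
    rw [MeasureTheory.setIntegral_union
      (by apply Set.disjoint_left.mpr; rintro x ⟨_, hx1⟩ ⟨hx2, _⟩; linarith)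
      measurableSet_Ioo
      (hcont _ _ le_rfl (by linarith) ht1')
      (hcont _ _ (by linarith) le_rfl ht2')]
    have hIoo : ∀ p q : ℝ, p ≤ q → -2 ≤ p → q ≤ 2 → (t ∉ Set.Icc p q) →
        (∫ s in Set.Ioo p q, (1 / (2 * π)) * Real.sqrt (4 - s ^ 2) / (t - s))
          = (1 / (2 * π)) * (scF t q - scF t p) := by
      intro p q hpq hp hq htpq
      rw [← MeasureTheory.integral_Ioc_eq_integral_Ioo,
        ← intervalIntegral.integral_of_le hpq]
      rw [show (fun s => (1 / (2 * π)) * Real.sqrt (4 - s ^ 2) / (t - s))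
          = (fun s => (1 / (2 * π)) * (Real.sqrt (4 - s ^ 2) / (t - s))) by
        funext s; ring]
      rw [intervalIntegral.integral_const_mul, scF_ftc t ht p q hp hq hpq htpq]
    rw [hIoo _ _ (by linarith) le_rfl (by linarith) ht1',
      hIoo _ _ (by linarith) (by linarith) le_rfl ht2']
    -- now the algebraic identity with Ψ
    rw [hΨ, scF_two t ht, scF_neg_two t ht]
    have hN1 : (0:ℝ) < Nf (t - ε) := Nf_pos t ht _ (by linarith) (by linarith)
    have hN2 : (0:ℝ) < Nf (t + ε) := Nf_pos t ht _ (by linarith) (by linarith)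
    have hε' : (2:ℝ) * ε ≠ 0 := by positivity
    have hlog1 : Real.log (Nf (t - ε) / (2 * ((t - ε) - t)))
        = Real.log (Nf (t - ε)) - Real.log (2 * ε) := by
      rw [show (2:ℝ) * ((t - ε) - t) = -(2 * ε) by ring, div_neg, Real.log_neg_eq_log,
        Real.log_div hN1.ne' hε']
    have hlog2 : Real.log (Nf (t + ε) / (2 * ((t + ε) - t)))
        = Real.log (Nf (t + ε)) - Real.log (2 * ε) := by
      rw [show (2:ℝ) * ((t + ε) - t) = 2 * ε by ring, Real.log_div hN2.ne' hε']
    unfold scF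
    simp only [hNf, ← hadef] at hlog1 hlog2 ⊢
    rw [hlog1, hlog2]
    ring
  apply Tendsto.congr' ?_ ?_
  · exact Ψ
  · filter_upwards [hmem] with ε hε
    exact (heq ε hε).symm
  · -- Tendsto Ψ (𝓝[>] 0) (𝓝 (t/2))
    have hπ : (0:ℝ) < π := Real.pi_pos
    have hNt : Nf t ≠ 0 := (Nf_pos t ht t (by linarith) (by linarith)).ne'
    have hcont : ContinuousAt Ψ 0 := by
      rw [hΨ]
      apply ContinuousAt.mul continuousAt_const
      apply ContinuousAt.add continuousAt_const
      apply ContinuousAt.add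
      apply ContinuousAt.add
      apply ContinuousAt.sub
      · apply ContinuousAt.mul continuousAt_const
        apply ContinuousAt.sub
        · exact (Real.continuous_arcsin.continuousAt).comp (by fun_prop)
        · exact (Real.continuous_arcsin.continuousAt).comp (by fun_prop)
      · exact (Real.continuous_sqrt.continuousAt).comp (by fun_prop)
      · exact (Real.continuous_sqrt.continuousAt).comp (by fun_prop)
      · apply ContinuousAt.mul continuousAt_const
        apply ContinuousAt.sub
        · exact (Real.continuousAt_log (by simpa using hNt)).comp (by fun_prop)
        · exact (Real.continuousAt_log (by simpa using hNt)).comp (by fun_prop)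
    have hval : Ψ 0 = t / 2 := by
      rw [hΨ]
      simp only [sub_zero, add_zero]
      field_simp
      ring
    have := hcont.tendsto
    rw [hval] at this
    exact this.mono_left nhdsWithin_le_nhds
end
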